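/- Let E₁, E₂, E₃ be real vector spaces, let T₁ : E₁ → E₂ and T₂ : E₂ → E₃ be bijective linear maps, and let K₁ be a companion of T₁ and K₂ a companion of T₂ (finite-rank maps with T₁+K₁ and T₂+K₂ bijective). Then K := (T₂+K₂)(T₁+K₁) − T₂T₁ is a companion of the bijective map T₂T₁, and the sign of det((T₂T₁)⁻¹(T₂T₁+K)) equals the product of the sign of det(T₁⁻¹(T₁+K₁)) and the sign of det(T₂⁻¹(T₂+K₂)). -/

import Mathlib

/-- The determinant of an admissible endomorphism `S` (one with `range (id − S)`
finite-dimensional): the determinant of the restriction of `S` to any finite-dimensional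
subspace containing `range (id − S)`, here the minimal one. -/
noncomputable def admDet {E : Type*} [AddCommGroup E] [Module ℝ E] (S : E →ₗ[ℝ] E) : ℝ :=
  LinearMap.det (S.restrict
    (p := LinearMap.range ((LinearMap.id : E →ₗ[ℝ] E) - S))
    (q := LinearMap.range ((LinearMap.id : E →ₗ[ℝ] E) - S))
    (fun x hx => by
      have h1 : ((LinearMap.id : E →ₗ[ℝ] E) - S) x ∈
          LinearMap.range ((LinearMap.id : E →ₗ[ℝ] E) - S) :=
        LinearMap.mem_range_self _ x
      have h2 : S x = x - ((LinearMap.id : E →ₗ[ℝ] E) - S) x := by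
        simp
      rw [h2]
      exact Submodule.sub_mem _ hx h1))

open Classical in
/-- Inverse of a bijective linear map (junk value `0` otherwise). -/
noncomputable def linInv {E F : Type*} [AddCommGroup E] [Module ℝ E] [AddCommGroup F] [Module ℝ F]
    (f : E →ₗ[ℝ] F) : F →ₗ[ℝ] E :=
  if h : Function.Bijective ⇑f then ((LinearEquiv.ofBijective f h).symm : F →ₗ[ℝ] E) else 0



open LinearMap

section Aux

variable {E F : Type*} [AddCommGroup E] [Module ℝ E] [AddCommGroup F] [Module ℝ F]

lemma mySign_mul (a b : ℝ) : Real.sign (a * b) = Real.sign a * Real.sign b := by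
  rcases lt_trichotomy a 0 with ha | ha | ha <;>
    rcases lt_trichotomy b 0 with hb | hb | hb <;>
    simp [ha, hb, Real.sign_of_pos, Real.sign_of_neg, Real.sign_zero,
      mul_pos, mul_neg_of_pos_of_neg, mul_neg_of_neg_of_pos, mul_pos_of_neg_of_neg]

lemma det_restrict_congr (S : E →ₗ[ℝ] E) {r p : Submodule ℝ E} (hrp : r ≤ p)
    [FiniteDimensional ℝ p]
    (hS : ∀ x : E, x - S x ∈ r)
    (hp : ∀ x ∈ p, S x ∈ p) (hr : ∀ x ∈ r, S x ∈ r) :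
    LinearMap.det (S.restrict hp) = LinearMap.det (S.restrict hr) := by
  classical
  haveI : FiniteDimensional ℝ r := Submodule.finiteDimensional_of_le hrp
  set r' : Submodule ℝ p := r.comap p.subtype with hr'def
  obtain ⟨q', hq'⟩ := r'.exists_isCompl
  set e : (r' × q') ≃ₗ[ℝ] p := Submodule.prodEquivOfIsCompl r' q' hq' with he
  set f : p →ₗ[ℝ] p := S.restrict hp with hf
  set fr : r →ₗ[ℝ] r := S.restrict hr with hfr
  set φ : (r.comap p.subtype) ≃ₗ[ℝ] r := Submodule.comapSubtypeEquivOfLe hrp with hφ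
  set g : (r' × q') →ₗ[ℝ] (r' × q') :=
    (e.symm : p →ₗ[ℝ] (r' × q')) ∘ₗ f ∘ₗ (e : (r' × q') →ₗ[ℝ] p) with hg
  have hdet1 : LinearMap.det f = LinearMap.det g := by
    have := LinearMap.det_conj f e.symm
    rw [LinearEquiv.symm_symm] at this
    exact this.symm
  set b₁ := Module.finBasis ℝ r' with hb₁
  set b₂ := Module.finBasis ℝ q' with hb₂
  set b := b₁.prod b₂ with hb
  set M := LinearMap.toMatrix b b g with hM
  have hgl : ∀ j, g (b₁ j, 0) = (φ.symm (fr (φ (b₁ j))), 0) := by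
    intro j
    rw [hg]
    simp only [coe_comp, Function.comp_apply, LinearEquiv.coe_coe]
    rw [LinearEquiv.symm_apply_eq]
    apply Subtype.ext
    simp [he, hr'def, hf, hfr, hφ, LinearMap.restrict_coe_apply]
  have hgr : ∀ j, ∃ w : r', g (0, b₂ j) = (-w, b₂ j) := by
    intro j
    set y : p := e (0, b₂ j) with hy
    have hw : (y : E) - S (y : E) ∈ r := hS _
    have hw' : ((y : E) - S (y : E)) ∈ p := hrp hw
    set w : r' := ⟨⟨_, hw'⟩, hw⟩ with hwdef
    refine ⟨w, ?_⟩
    rw [hg]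
    simp only [coe_comp, Function.comp_apply, LinearEquiv.coe_coe]
    rw [LinearEquiv.symm_apply_eq]
    have : f y = y - ((w : p)) := by
      apply Subtype.ext
      simp [hf, LinearMap.restrict_coe_apply, hwdef]
    rw [this]
    have h2 : e (-w, b₂ j) = e (0, b₂ j) - e ((w : r'), (0 : q')) := by
      rw [← map_sub]
      norm_num
    have h1 : e ((w : r'), (0 : q')) = (w : p) := by
      simp [he]
    rw [h2, h1, ← hy]
  -- matrix block structure
  have key : M = Matrix.fromBlocks
      (LinearMap.toMatrix b₁ b₁ ((φ.symm : r →ₗ[ℝ] r') ∘ₗ fr ∘ₗ (φ : r' →ₗ[ℝ] r)))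
      M.toBlocks₁₂ 0 1 := by
    ext (i | i) (j | j)
    · simp [Matrix.fromBlocks_apply₁₁, hM, LinearMap.toMatrix_apply, hgl, hb,
        Module.Basis.prod_repr_inl]
    · rfl
    · simp [Matrix.fromBlocks_apply₂₁, hM, LinearMap.toMatrix_apply, hgl, hb,
        Module.Basis.prod_repr_inr]
    · obtain ⟨w, hw⟩ := hgr j
      simp [Matrix.fromBlocks_apply₂₂, hM, LinearMap.toMatrix_apply, hw, hb,
        Module.Basis.prod_repr_inr, Matrix.one_apply, Finsupp.single_apply, eq_comm]
  have hdet2 : LinearMap.det g = M.det := (LinearMap.det_toMatrix b g).symm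
  have hdet3 : M.det = LinearMap.det fr := by
    rw [key, Matrix.det_fromBlocks_zero₂₁, Matrix.det_one, mul_one,
      LinearMap.det_toMatrix]
    have := LinearMap.det_conj fr φ.symm
    rw [LinearEquiv.symm_symm] at this
    exact this
  rw [hdet1, hdet2, hdet3]


lemma adm_mem {S : E →ₗ[ℝ] E} {p : Submodule ℝ E} (hS : ∀ x : E, x - S x ∈ p) :
    ∀ x ∈ p, S x ∈ p := by
  intro x hx
  have h : S x = x - (x - S x) := (sub_sub_cancel x (S x)).symm
  rw [h]
  exact Submodule.sub_mem p hx (hS x)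

lemma admDet_eq_det_restrict (S : E →ₗ[ℝ] E) {p : Submodule ℝ E} [FiniteDimensional ℝ p]
    (hS : ∀ x : E, x - S x ∈ p) :
    admDet S = LinearMap.det (S.restrict (adm_mem hS)) := by
  set r := LinearMap.range ((LinearMap.id : E →ₗ[ℝ] E) - S) with hrdef
  have hrange : ∀ x : E, x - S x ∈ r := fun x => ⟨x, rfl⟩
  have hrp : r ≤ p := by
    rintro y ⟨x, rfl⟩
    simpa using hS x
  haveI : FiniteDimensional ℝ r := Submodule.finiteDimensional_of_le hrp
  have h1 : admDet S = LinearMap.det (S.restrict (adm_mem hrange)) := rfl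
  rw [h1, ← det_restrict_congr S hrp hrange (adm_mem hS) (adm_mem hrange)]

lemma admDet_comp (S₁ S₂ : E →ₗ[ℝ] E) {p₁ p₂ : Submodule ℝ E}
    [FiniteDimensional ℝ p₁] [FiniteDimensional ℝ p₂]
    (h₁ : ∀ x : E, x - S₁ x ∈ p₁) (h₂ : ∀ x : E, x - S₂ x ∈ p₂) :
    admDet (S₁ ∘ₗ S₂) = admDet S₁ * admDet S₂ := by
  set p := p₁ ⊔ p₂ with hpdef
  have h₁' : ∀ x : E, x - S₁ x ∈ p := fun x => Submodule.mem_sup_left (h₁ x)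
  have h₂' : ∀ x : E, x - S₂ x ∈ p := fun x => Submodule.mem_sup_right (h₂ x)
  have hc : ∀ x : E, x - (S₁ ∘ₗ S₂) x ∈ p := by
    intro x
    have h : x - (S₁ ∘ₗ S₂) x = (x - S₂ x) + (S₂ x - S₁ (S₂ x)) := by
      simp only [coe_comp, Function.comp_apply]
      abel
    rw [h]
    exact Submodule.add_mem p (h₂' x) (h₁' (S₂ x))
  rw [admDet_eq_det_restrict (S₁ ∘ₗ S₂) hc, admDet_eq_det_restrict S₁ h₁',
    admDet_eq_det_restrict S₂ h₂']
  have hre : (S₁ ∘ₗ S₂).restrict (adm_mem hc) =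
      (S₁.restrict (adm_mem h₁')) ∘ₗ (S₂.restrict (adm_mem h₂')) := by
    ext x
    simp [LinearMap.restrict_coe_apply]
  rw [hre, LinearMap.det_comp]

lemma admDet_conj (e : E ≃ₗ[ℝ] F) (S : F →ₗ[ℝ] F) {p : Submodule ℝ F}
    [FiniteDimensional ℝ p] (hS : ∀ y : F, y - S y ∈ p) :
    admDet ((e.symm : F →ₗ[ℝ] E) ∘ₗ S ∘ₗ (e : E →ₗ[ℝ] F)) = admDet S := by
  set q : Submodule ℝ E := p.map (e.symm : F →ₗ[ℝ] E) with hqdef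
  have hq : ∀ x : E, x - ((e.symm : F →ₗ[ℝ] E) ∘ₗ S ∘ₗ (e : E →ₗ[ℝ] F)) x ∈ q := by
    intro x
    refine ⟨e x - S (e x), hS (e x), ?_⟩
    simp [map_sub]
  rw [admDet_eq_det_restrict _ hq, admDet_eq_det_restrict S hS]
  set ε : p ≃ₗ[ℝ] q := e.symm.submoduleMap p with hε
  have hre : ((e.symm : F →ₗ[ℝ] E) ∘ₗ S ∘ₗ (e : E →ₗ[ℝ] F)).restrict (adm_mem hq) =
      (ε : p →ₗ[ℝ] q) ∘ₗ (S.restrict (adm_mem hS)) ∘ₗ (ε.symm : q →ₗ[ℝ] p) := by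
    ext z
    have h1 : ((ε.symm z : F)) = e (z : E) := by
      have h0 := LinearEquiv.submoduleMap_symm_apply e.symm p z
      rw [LinearEquiv.symm_symm] at h0
      exact h0
    rw [hε] at h1
    simp only [hε, coe_comp, Function.comp_apply, LinearEquiv.coe_coe]
    rw [LinearEquiv.submoduleMap_apply, LinearMap.restrict_coe_apply,
      LinearMap.restrict_coe_apply, h1]
    simp
  rw [hre, LinearMap.det_conj]

lemma linInv_right (f : E →ₗ[ℝ] F) (h : Function.Bijective ⇑f) (y : F) :
    f (linInv f y) = y := by
  rw [linInv, dif_pos h]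
  exact (LinearEquiv.ofBijective f h).apply_symm_apply y

lemma linInv_left (f : E →ₗ[ℝ] F) (h : Function.Bijective ⇑f) (x : E) :
    linInv f (f x) = x := by
  rw [linInv, dif_pos h]
  exact (LinearEquiv.ofBijective f h).symm_apply_apply x

end Aux

/-- For bijective `T₁, T₂` with companions `K₁, K₂`, the map
`K = (T₂+K₂)(T₁+K₁) − T₂T₁` is a companion of the bijective composition `T₂T₁`, and the sign of
`det((T₂T₁)⁻¹(T₂T₁+K))` is the product of the signs of `det(T₁⁻¹(T₁+K₁))` and
`det(T₂⁻¹(T₂+K₂))`. -/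
theorem sign_of_oriented_composition
    {E₁ E₂ E₃ : Type*} [AddCommGroup E₁] [Module ℝ E₁] [AddCommGroup E₂] [Module ℝ E₂]
    [AddCommGroup E₃] [Module ℝ E₃]
    (T₁ : E₁ →ₗ[ℝ] E₂) (T₂ : E₂ →ₗ[ℝ] E₃)
    (hT₁ : Function.Bijective ⇑T₁) (hT₂ : Function.Bijective ⇑T₂)
    (K₁ : E₁ →ₗ[ℝ] E₂) (K₂ : E₂ →ₗ[ℝ] E₃)
    (hr₁ : FiniteDimensional ℝ (LinearMap.range K₁))
    (hr₂ : FiniteDimensional ℝ (LinearMap.range K₂))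
    (hb₁ : Function.Bijective ⇑(T₁ + K₁)) (hb₂ : Function.Bijective ⇑(T₂ + K₂))
    (K : E₁ →ₗ[ℝ] E₃) (hK : K = (T₂ + K₂) ∘ₗ (T₁ + K₁) - T₂ ∘ₗ T₁) :
    FiniteDimensional ℝ (LinearMap.range K) ∧
    Function.Bijective ⇑(T₂ ∘ₗ T₁ + K) ∧
    Real.sign (admDet (linInv (T₂ ∘ₗ T₁) ∘ₗ (T₂ ∘ₗ T₁ + K))) =
      Real.sign (admDet (linInv T₁ ∘ₗ (T₁ + K₁))) *
        Real.sign (admDet (linInv T₂ ∘ₗ (T₂ + K₂))) := by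
  classical
  have hsum : T₂ ∘ₗ T₁ + K = (T₂ + K₂) ∘ₗ (T₁ + K₁) := by
    rw [hK]; abel
  have hTT : Function.Bijective ⇑(T₂ ∘ₗ T₁) := by
    rw [LinearMap.coe_comp]; exact hT₂.comp hT₁
  have hbij : Function.Bijective ⇑(T₂ ∘ₗ T₁ + K) := by
    rw [hsum, LinearMap.coe_comp]; exact hb₂.comp hb₁
  haveI := hr₁; haveI := hr₂
  -- finite rank of K
  have hK2 : ∀ x, K x = T₂ (K₁ x) + K₂ ((T₁ + K₁) x) := by
    intro x
    simp only [hK, LinearMap.sub_apply, LinearMap.coe_comp, Function.comp_apply,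
      LinearMap.add_apply, map_add]
    abel
  have hfinK : FiniteDimensional ℝ (LinearMap.range K) := by
    have hle : LinearMap.range K ≤ (LinearMap.range K₁).map T₂ ⊔ LinearMap.range K₂ := by
      rintro y ⟨x, rfl⟩
      rw [hK2]
      exact Submodule.add_mem _
        (Submodule.mem_sup_left (Submodule.mem_map_of_mem (LinearMap.mem_range_self K₁ x)))
        (Submodule.mem_sup_right (LinearMap.mem_range_self K₂ _))
    exact Submodule.finiteDimensional_of_le hle
  refine ⟨hfinK, hbij, ?_⟩
  -- the sign computation
  set A : E₁ →ₗ[ℝ] E₁ := linInv T₁ ∘ₗ (T₁ + K₁) with hA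
  set B : E₂ →ₗ[ℝ] E₂ := linInv T₂ ∘ₗ (T₂ + K₂) with hB
  set e₁ : E₁ ≃ₗ[ℝ] E₂ := LinearEquiv.ofBijective T₁ hT₁ with he₁
  set pA : Submodule ℝ E₁ := (LinearMap.range K₁).map (linInv T₁) with hpA
  set pB : Submodule ℝ E₂ := (LinearMap.range K₂).map (linInv T₂) with hpB
  have hAadm : ∀ x : E₁, x - A x ∈ pA := by
    intro x
    refine ⟨-(K₁ x), Submodule.neg_mem _ (LinearMap.mem_range_self K₁ x), ?_⟩
    have h1 : A x = x + linInv T₁ (K₁ x) := by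
      have := linInv_left T₁ hT₁ x
      simp only [hA, LinearMap.coe_comp, Function.comp_apply, LinearMap.add_apply, map_add, this]
    rw [map_neg, h1]
    abel
  have hBadm : ∀ y : E₂, y - B y ∈ pB := by
    intro y
    refine ⟨-(K₂ y), Submodule.neg_mem _ (LinearMap.mem_range_self K₂ y), ?_⟩
    have h1 : B y = y + linInv T₂ (K₂ y) := by
      have := linInv_left T₂ hT₂ y
      simp only [hB, LinearMap.coe_comp, Function.comp_apply, LinearMap.add_apply, map_add, this]
    rw [map_neg, h1]
    abel
  set C : E₁ →ₗ[ℝ] E₁ := (e₁.symm : E₂ →ₗ[ℝ] E₁) ∘ₗ B ∘ₗ (e₁ : E₁ →ₗ[ℝ] E₂) with hC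
  have hCadm : ∀ x : E₁, x - C x ∈ pB.map (e₁.symm : E₂ →ₗ[ℝ] E₁) := by
    intro x
    refine ⟨e₁ x - B (e₁ x), hBadm (e₁ x), ?_⟩
    simp only [map_sub, hC, LinearMap.coe_comp, Function.comp_apply, LinearEquiv.coe_coe,
      LinearEquiv.symm_apply_apply]
  -- the key factorization
  have hfact : linInv (T₂ ∘ₗ T₁) ∘ₗ (T₂ ∘ₗ T₁ + K) = C ∘ₗ A := by
    rw [hsum]
    ext x
    have hinv : ∀ z : E₃, linInv (T₂ ∘ₗ T₁) z = linInv T₁ (linInv T₂ z) := by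
      intro z
      apply hTT.injective
      rw [linInv_right _ hTT]
      simp only [LinearMap.coe_comp, Function.comp_apply]
      rw [linInv_right T₁ hT₁, linInv_right T₂ hT₂]
    have he₁app : ∀ w : E₁, (e₁ : E₁ →ₗ[ℝ] E₂) w = T₁ w := fun w => rfl
    have he₁symm : ∀ w : E₂, (e₁.symm : E₂ →ₗ[ℝ] E₁) w = linInv T₁ w := by
      intro w
      rw [linInv, dif_pos hT₁]
    simp only [LinearMap.coe_comp, Function.comp_apply, hC, hA, hB, LinearEquiv.coe_coe]
    rw [hinv]
    have : (e₁ : E₁ ≃ₗ[ℝ] E₂) (linInv T₁ ((T₁ + K₁) x)) = T₁ (linInv T₁ ((T₁ + K₁) x)) := rfl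
    rw [this, linInv_right T₁ hT₁]
    have h2 : e₁.symm (linInv T₂ ((T₂ + K₂) ((T₁ + K₁) x))) =
        linInv T₁ (linInv T₂ ((T₂ + K₂) ((T₁ + K₁) x))) := he₁symm _
    rw [h2]
  rw [hfact]
  haveI : FiniteDimensional ℝ pA := by rw [hpA]; infer_instance
  haveI : FiniteDimensional ℝ pB := by rw [hpB]; infer_instance
  rw [admDet_comp C A hCadm hAadm, admDet_conj e₁ B hBadm, mySign_mul, mul_comm]
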